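/- Let V be a finite-dimensional real normed vector space, let A : V → V be a linear map, and let g > 0 be such that for all t ≥ 0 and all x ∈ V, ‖exp(tA)(x)‖ ≤ e^{−gt}·‖x‖, where exp(tA) is the operator exponential. Then A is bijective, and for all x ∈ V, g·‖x‖ ≤ ‖A(x)‖; equivalently, ‖A⁻¹(y)‖ ≤ ‖y‖/g for all y ∈ V. -/

import Mathlib

/-- If the operator semigroup `exp(tA)` on a finite-dimensional real normed space decays
exponentially at rate `g > 0`, then `A` is bijective with `g‖x‖ ≤ ‖A x‖`, i.e.
`‖A⁻¹ y‖ ≤ ‖y‖ / g`. -/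
theorem bijective_and_resolvent_bound_of_exp_decay
    {V : Type*} [NormedAddCommGroup V] [NormedSpace ℝ V] [FiniteDimensional ℝ V]
    (A : V →L[ℝ] V) (g : ℝ) (hg : 0 < g)
    (hdecay : ∀ t : ℝ, 0 ≤ t → ∀ x : V,
      ‖(NormedSpace.exp (t • A)) x‖ ≤ Real.exp (-g * t) * ‖x‖) :
    Function.Bijective A ∧ (∀ x : V, g * ‖x‖ ≤ ‖A x‖) ∧
      ∃ B : V →L[ℝ] V, B.comp A = ContinuousLinearMap.id ℝ V ∧
        A.comp B = ContinuousLinearMap.id ℝ V ∧ ∀ y : V, ‖B y‖ ≤ ‖y‖ / g := by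
  have hlow : ∀ x : V, g * ‖x‖ ≤ ‖A x‖ := by
    intro x
    -- F t = exp (t•A) x
    set F : ℝ → V := fun t => (NormedSpace.exp (t • A)) x with hF
    have hderiv : ∀ s : ℝ, HasDerivAt F ((NormedSpace.exp (s • A)) (A x)) s := by
      intro s
      have h1 : HasDerivAt (fun u : ℝ => NormedSpace.exp (u • A))
          (NormedSpace.exp (s • A) * A) s := hasDerivAt_exp_smul_const A s
      have h2 := ((ContinuousLinearMap.apply ℝ V x).hasFDerivAt.comp s
        h1.hasFDerivAt).hasDerivAt
      simpa [hF, Function.comp_def] using h2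
    have hcont : Continuous fun s : ℝ => (NormedSpace.exp (s • A)) (A x) := by
      exact continuous_iff_continuousAt.2 fun s =>
        ((hasDerivAt_exp_smul_const A s).continuousAt).clm_apply continuousAt_const
    have hF0 : F 0 = x := by
      simp [hF, NormedSpace.exp_zero]
    have key : ∀ t : ℝ, 0 ≤ t → ‖x‖ ≤ ‖A x‖ / g + Real.exp (-g * t) * ‖x‖ := by
      intro t ht
      have hint : F t - F 0 = ∫ s in (0:ℝ)..t, (NormedSpace.exp (s • A)) (A x) := by
        refine (intervalIntegral.integral_eq_sub_of_hasDerivAt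
          (fun s _ => hderiv s) ?_).symm
        exact hcont.intervalIntegrable 0 t
      have hbound : ‖F t - x‖ ≤ ‖A x‖ / g := by
        have h0 : ‖F t - F 0‖ ≤ ‖A x‖ / g := by
          rw [hint]
          have h1 : ‖∫ s in (0:ℝ)..t, (NormedSpace.exp (s • A)) (A x)‖
              ≤ |∫ s in (0:ℝ)..t, Real.exp (-g * s) * ‖A x‖| := by
            have hb : ∀ᵐ s ∂(MeasureTheory.volume.restrict (Set.uIoc (0:ℝ) t)),
                ‖(NormedSpace.exp (s • A)) (A x)‖ ≤ Real.exp (-g * s) * ‖A x‖ := by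
              filter_upwards [MeasureTheory.ae_restrict_mem measurableSet_Ioc] with s hs
              rw [Set.uIoc_of_le ht] at hs
              exact hdecay s hs.1.le (A x)
            exact intervalIntegral.norm_integral_le_abs_of_norm_le hb
              (((Real.continuous_exp.comp (continuous_const.mul continuous_id)).mul
                continuous_const).intervalIntegrable 0 t)
          have h2 : ∫ s in (0:ℝ)..t, Real.exp (-g * s) * ‖A x‖
              = ((1 - Real.exp (-g * t)) / g) * ‖A x‖ := by
            rw [intervalIntegral.integral_mul_const]
            congr 1
            have : ∀ s : ℝ, HasDerivAt (fun u : ℝ => -(1/g) * Real.exp (-g * u))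
                (Real.exp (-g * s)) s := by
              intro s
              have := ((Real.hasDerivAt_exp (-g * s)).comp s
                ((hasDerivAt_id s).const_mul (-g))).const_mul (-(1/g))
              exact this.congr_deriv (by have := hg.ne'; field_simp)
            rw [intervalIntegral.integral_eq_sub_of_hasDerivAt (fun s _ => this s)
              (((Real.continuous_exp.comp (continuous_const.mul continuous_id)).intervalIntegrable 0 t))]
            field_simp
            simp only [mul_zero, neg_zero, Real.exp_zero]
            ring
          have hexple : Real.exp (-g * t) ≤ 1 := by
            rw [← Real.exp_zero]
            apply Real.exp_le_exp.mpr
            nlinarith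
          have h3 : |((1 - Real.exp (-g * t)) / g) * ‖A x‖| ≤ ‖A x‖ / g := by
            rw [abs_of_nonneg (mul_nonneg (div_nonneg (by linarith) hg.le) (norm_nonneg _)), div_mul_eq_mul_div,
              div_le_div_iff_of_pos_right hg]
            have : Real.exp (-g * t) ≥ 0 := (Real.exp_pos _).le
            nlinarith [norm_nonneg (A x)]
          rw [h2] at h1
          linarith
        rwa [hF0] at h0
      calc ‖x‖ ≤ ‖F t‖ + ‖x - F t‖ := by
              have := norm_add_le (F t) (x - F t); simpa using this
        _ ≤ Real.exp (-g * t) * ‖x‖ + ‖A x‖ / g := by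
              have h4 := hdecay t ht x
              have h5 : ‖x - F t‖ = ‖F t - x‖ := norm_sub_rev _ _
              rw [h5]; exact add_le_add h4 hbound
        _ = ‖A x‖ / g + Real.exp (-g * t) * ‖x‖ := by ring
    -- take t → ∞
    have hlim : Filter.Tendsto (fun t : ℝ => ‖A x‖ / g + Real.exp (-g * t) * ‖x‖)
        Filter.atTop (nhds (‖A x‖ / g)) := by
      have h0 : Filter.Tendsto (fun t : ℝ => Real.exp (-g * t)) Filter.atTop (nhds 0) := by
        have h1 : Filter.Tendsto (fun t : ℝ => g * t) Filter.atTop Filter.atTop :=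
          Filter.Tendsto.const_mul_atTop hg Filter.tendsto_id
        have h2 := Filter.tendsto_neg_atTop_atBot.comp h1
        have h2' : Filter.Tendsto (fun t : ℝ => -g * t) Filter.atTop Filter.atBot := by
          convert h2 using 1
          ext t
          simp [Function.comp, neg_mul]
        exact Real.tendsto_exp_atBot.comp h2'
      have := (h0.mul_const ‖x‖).const_add (‖A x‖ / g)
      simpa using this
    have hle : ‖x‖ ≤ ‖A x‖ / g := by
      refine ge_of_tendsto hlim ?_
      filter_upwards [Filter.eventually_ge_atTop 0] with t ht using key t ht
    rw [mul_comm, ← le_div_iff₀ hg]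
    exact hle
  have hinj : Function.Injective A := by
    intro a b hab
    have : A (a - b) = 0 := by simp [map_sub, hab]
    have h := hlow (a - b)
    rw [this, norm_zero] at h
    have : ‖a - b‖ = 0 := le_antisymm (by nlinarith [norm_nonneg (a-b)]) (norm_nonneg _)
    exact sub_eq_zero.mp (norm_eq_zero.mp this)
  have hinjL : Function.Injective (A : V →ₗ[ℝ] V) := hinj
  have hbij : Function.Bijective A := by
    refine ⟨hinj, ?_⟩
    have := (LinearMap.injective_iff_surjective (f := (A : V →ₗ[ℝ] V))).mp hinjL
    exact this
  let e : V ≃L[ℝ] V := ContinuousLinearEquiv.ofBijective A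
    ((LinearMap.ker_eq_bot (f := (A : V →ₗ[ℝ] V))).mpr hinj) (LinearMap.range_eq_top.mpr hbij.2)
  refine ⟨hbij, hlow, (e.symm : V →L[ℝ] V), ?_, ?_, ?_⟩
  · ext v
    show e.symm (e v) = v
    exact e.symm_apply_apply v
  · ext v
    show e (e.symm v) = v
    exact e.apply_symm_apply v
  · intro y
    have := hlow (e.symm y)
    have hAe : A (e.symm y) = y := e.apply_symm_apply y
    rw [hAe] at this
    rw [le_div_iff₀ hg, mul_comm]
    exact this
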